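/- arXiv:2107.09790 — 2 statements merged into one kernel-verified Lean document; each statement's English description precedes it below -/
import Mathlib

section
/- Let d ≥ 2 and let γ = ⟨γ_1,…,γ_b⟩ be a sequence of positive integers with γ_1 = γ_b. Then for every n ≥ 1, α_{T^{(d)}_{γ^{⊗n}}} ≤ α_{T^{(d)}_γ}. -/
noncomputable section
open Classical

/-! ### Graph-metric notions -/

/-- The graph ball of radius `R` (an integer) around `x` in the path metric. -/
def gBall {V : Type*} (G : SimpleGraph V) (x : V) (R : ℕ) : Set V :=
  {y | G.dist x y ≤ R}

/-- The graph ball of real radius `r` around `x` in the path metric. -/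
def gBallReal {V : Type*} (G : SimpleGraph V) (x : V) (r : ℝ) : Set V :=
  {y | (G.dist x y : ℝ) ≤ r}

/-- The graph sphere of radius `R` around `x` in the path metric. -/
def gSphere {V : Type*} (G : SimpleGraph V) (x : V) (R : ℕ) : Set V :=
  {y | G.dist x y = R}

/-- The diameter (in the path metric) of a set `S` of vertices, as a real number. -/
def graphSetDiam {V : Type*} (G : SimpleGraph V) (S : Set V) : ℝ :=
  sSup {r : ℝ | ∃ x ∈ S, ∃ y ∈ S, r = (G.dist x y : ℝ)}

/-- `G` contains (at least) `n` pairwise vertex-disjoint paths, each with one endpoint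
in `S` and the other endpoint in `T`. -/
def HasDisjointPathsBetween {V : Type*} (G : SimpleGraph V) (S T : Set V) (n : ℕ) : Prop :=
  ∃ (u v : Fin n → V) (p : ∀ i, G.Walk (u i) (v i)),
    (∀ i, (p i).IsPath) ∧ (∀ i, u i ∈ S) ∧ (∀ i, v i ∈ T) ∧
    ∀ i j, i ≠ j → List.Disjoint (p i).support (p j).support

/-! ### Subdivisions -/

/-- The `m`-subdivision of a graph `G`: every edge is replaced by a path with `m` edges,
introducing `m - 1` new internal vertices on each edge. -/
def Subdivision {V : Type*} (G : SimpleGraph V) (m : ℕ) :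
    SimpleGraph (V ⊕ (G.edgeSet × Fin (m - 1))) :=
  SimpleGraph.fromRel fun x y =>
    match x, y with
    | Sum.inl a, Sum.inl b => m = 1 ∧ G.Adj a b
    | Sum.inl a, Sum.inr (e, k) =>
        (k.val = 0 ∧ a = (Quot.out (e : Sym2 V)).1) ∨
        (k.val = m - 2 ∧ a = (Quot.out (e : Sym2 V)).2)
    | Sum.inr (e, k), Sum.inr (e', k') => e = e' ∧ k'.val = k.val + 1
    | Sum.inr _, Sum.inl _ => False

/-! ### Sphere packings -/

/-- A packing of balls in `ℝ^d`, indexed by `ι`: closed balls with positive radii and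
pairwise disjoint interiors. -/
structure BallPacking (d : ℕ) (ι : Type) where
  center : ι → EuclideanSpace ℝ (Fin d)
  radius : ι → ℝ
  radius_pos : ∀ i, 0 < radius i
  interior_disjoint : Pairwise fun i j =>
    Disjoint (Metric.ball (center i) (radius i)) (Metric.ball (center j) (radius j))

/-- The closed ball with index `i` in the packing. -/
def BallPacking.cball {d : ℕ} {ι : Type} (P : BallPacking d ι) (i : ι) :
    Set (EuclideanSpace ℝ (Fin d)) :=
  Metric.closedBall (P.center i) (P.radius i)

/-- The tangency graph of a ball packing: two balls are adjacent when they intersect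
in exactly one point. -/
def BallPacking.tangencyGraph {d : ℕ} {ι : Type} (P : BallPacking d ι) : SimpleGraph ι where
  Adj i j := i ≠ j ∧ ∃ p, P.cball i ∩ P.cball j = {p}
  symm := by
    constructor
    rintro i j ⟨hij, p, hp⟩
    exact ⟨hij.symm, p, by rwa [Set.inter_comm]⟩
  loopless := ⟨fun i h => h.1 rfl⟩

/-- `G` is `M`-uniformly sphere-packed in `ℝ^d`: `G` is isomorphic to the tangency graph of
a packing of interior-disjoint closed balls in which the ratio of radii of any two
tangent balls lies in `[1/M, M]`. -/
def IsUniformlySpherePacked (d : ℕ) (M : ℝ) {V : Type*} (G : SimpleGraph V) : Prop :=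
  ∃ (ι : Type) (P : BallPacking d ι), Nonempty (G ≃g P.tangencyGraph) ∧
    ∀ i j, P.tangencyGraph.Adj i j → P.radius i / P.radius j ∈ Set.Icc M⁻¹ M

/-! ### Tiles and tilings -/

/-- An axis-parallel closed hyperrectangle in `ℝ^d`, recorded by its lower and upper corners. -/
structure Tile (d : ℕ) where
  lower : Fin d → ℝ
  upper : Fin d → ℝ

/-- The subset of `ℝ^d` occupied by a tile. -/
def Tile.toSet {d : ℕ} (A : Tile d) : Set (EuclideanSpace ℝ (Fin d)) :=
  {x | ∀ i, x i ∈ Set.Icc (A.lower i) (A.upper i)}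

/-- The (open) interior of a tile. -/
def Tile.inner {d : ℕ} (A : Tile d) : Set (EuclideanSpace ℝ (Fin d)) :=
  {x | ∀ i, x i ∈ Set.Ioo (A.lower i) (A.upper i)}

/-- The side length of a tile along the `i`-th axis. -/
def Tile.len {d : ℕ} (A : Tile d) (i : Fin d) : ℝ := A.upper i - A.lower i

/-- Two tiles intersect in a set of nonzero `(d-1)`-dimensional volume: there is exactly one
coordinate in which their ranges meet in a single point, while in all other coordinates
their ranges overlap in a nondegenerate interval. -/
def Tile.Tangent {d : ℕ} (A B : Tile d) : Prop :=
  ∃ i, max (A.lower i) (B.lower i) = min (A.upper i) (B.upper i) ∧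
    ∀ j, j ≠ i → max (A.lower j) (B.lower j) < min (A.upper j) (B.upper j)

/-- The tangency graph of a collection of tiles: an edge between distinct tiles whose
intersection has nonzero `(d-1)`-dimensional volume. -/
def tangencyGraph {d : ℕ} (T : Set (Tile d)) : SimpleGraph T where
  Adj A B := A ≠ B ∧ (Tile.Tangent A.1 B.1 ∨ Tile.Tangent B.1 A.1)
  symm := by constructor; rintro A B ⟨h1, h2⟩; exact ⟨h1.symm, h2.symm⟩
  loopless := ⟨fun A h => h.1 rfl⟩

/-- The unit cube `[0,1]^d`. -/
def unitCube (d : ℕ) : Set (EuclideanSpace ℝ (Fin d)) :=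
  {x | ∀ i, x i ∈ Set.Icc (0:ℝ) 1}

/-- `T` is a tiling of the unit cube `[0,1]^d`: a finite collection of nondegenerate tiles with
pairwise disjoint interiors whose union is `[0,1]^d`. -/
def IsUnitTiling (d : ℕ) (T : Set (Tile d)) : Prop :=
  T.Finite ∧ (∀ A ∈ T, ∀ i, A.lower i < A.upper i) ∧
    (T.Pairwise fun A B => Disjoint A.inner B.inner) ∧
    (⋃ A ∈ T, A.toSet) = unitCube d

/-- The product of two tiles: a scaled copy of `B` placed inside `A`. -/
def tileProd {d : ℕ} (A B : Tile d) : Tile d where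
  lower := fun i => A.lower i + B.lower i * A.len i
  upper := fun i => A.lower i + B.upper i * A.len i

/-- The tiling product `S ∘ T`: every tile of `S` is replaced by a scaled copy of `T`. -/
def tilingProd {d : ℕ} (S T : Set (Tile d)) : Set (Tile d) :=
  Set.image2 tileProd S T

/-- The identity tiling, consisting of the single tile `[0,1]^d`. -/
def unitTile (d : ℕ) : Tile d := ⟨fun _ => 0, fun _ => 1⟩

/-- The `n`-fold iterated tiling product of `T` with itself. -/
def tilingPow {d : ℕ} (T : Set (Tile d)) : ℕ → Set (Tile d)
  | 0 => {unitTile d}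
  | n + 1 => tilingProd T (tilingPow T n)

/-- The aspect ratio `α_T` of a tiling: the maximum of `ℓ_j(A)/ℓ_j(B)` over pairs of tiles
adjacent in the tangency graph (at least `1`; equal to `1` for a single tile). -/
def tilingAlpha {d : ℕ} (T : Set (Tile d)) : ℝ :=
  sSup (insert 1 {r | ∃ A ∈ T, ∃ B ∈ T,
    (A ≠ B ∧ (Tile.Tangent A B ∨ Tile.Tangent B A)) ∧ ∃ j, r = A.len j / B.len j})

/-- `L_T`: the maximal side length appearing in the tiling `T`. -/
def tilingL {d : ℕ} (T : Set (Tile d)) : ℝ :=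
  sSup {r | ∃ A ∈ T, ∃ i, r = A.len i}

/-! ### The tilings `T_γ^{(d)}` and related quantities -/

/-- The tensor product of two sequences: `γ ⊗ γ' = ⟨γ_1γ'_1, …, γ_1γ'_b, …, γ_aγ'_1, …, γ_aγ'_b⟩`. -/
def tensorSeq (γ γ' : List ℕ) : List ℕ :=
  γ.flatMap fun g => γ'.map fun g' => g * g'

/-- The `n`-fold tensor power of the sequence `γ` (with `γ^{⊗0} = ⟨1⟩`). -/
def tensorPow (γ : List ℕ) : ℕ → List ℕ
  | 0 => [1]
  | n + 1 => tensorSeq γ (tensorPow γ n)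

/-- One tile of the tiling `T_γ^{(d)}`: the cell at grid position `v` inside the `i`-th slab. -/
def seqTile (d : ℕ) (γ : List ℕ) (i : Fin γ.length) (v : Fin d → ℕ) : Tile d where
  lower := fun j => if j.val < d - 1 then (v j : ℝ) / (γ.get i : ℝ)
    else (i.val : ℝ) / (γ.length : ℝ)
  upper := fun j => if j.val < d - 1 then ((v j : ℝ) + 1) / (γ.get i : ℝ)
    else ((i.val : ℝ) + 1) / (γ.length : ℝ)

/-- The tiling `T_γ^{(d)}` of `[0,1]^d`: for each `1 ≤ i ≤ b`, the slab
`[0,1]^{d-1} × [(i-1)/b, i/b]` is tiled by a `γ_i × ⋯ × γ_i` grid of translates of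
`[0,1/γ_i]^{d-1} × [0,1/b]`. -/
def seqTiling (d : ℕ) (γ : List ℕ) : Set (Tile d) :=
  {A | ∃ (i : Fin γ.length) (v : Fin d → ℕ),
    (∀ j : Fin d, (j.val < d - 1 → v j < γ.get i) ∧ (¬ j.val < d - 1 → v j = 0)) ∧
    A = seqTile d γ i v}

/-- `|γ|^{(d)} = γ_1^{d-1} + ⋯ + γ_b^{d-1}`, the number of tiles of `T_γ^{(d)}`. -/
def seqSize (d : ℕ) (γ : List ℕ) : ℕ := (γ.map fun g => g ^ (d - 1)).sum

/-- The growth exponent `k^{(d)}(γ) = log(|γ|^{(d)}) / log |γ|`. -/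
def growthExp (d : ℕ) (γ : List ℕ) : ℝ :=
  Real.log (seqSize d γ) / Real.log (γ.length : ℝ)

/-- The exponent `s(d,k) = d - 1 + (k - d)(1 - 1/(d-1))`. -/
def sdk (d : ℕ) (k : ℝ) : ℝ := (d : ℝ) - 1 + (k - (d : ℝ)) * (1 - 1 / ((d : ℝ) - 1))

/-- The sequence `γ^{(p,q,h)} = ⟨b, tb, …, tb, b⟩` with `b = h^{q(d-1)}`, `t = h^{p-dq}`,
and `b - 2` middle entries. -/
def gammaSeq (d p q h : ℕ) : List ℕ :=
  [h ^ (q * (d - 1))] ++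
    List.replicate (h ^ (q * (d - 1)) - 2) (h ^ (p - d * q) * h ^ (q * (d - 1))) ++
    [h ^ (q * (d - 1))]

/-! ### The infinite cube packing `Ŝ` and the graph `Ĝ_γ^{(d)}` -/

/-- The cube packing `Ŝ_n` in `ℝ^d`: for each `1 ≤ i ≤ b^n`, the slab
`[0,γ_1^n]^{d-1} × [h_{i-1}, h_i]` is tiled by a grid of cubes of side
`s_i = γ_1^n / (γ^{⊗n})_i`, where `h_i = s_1 + ⋯ + s_i`. -/
def hatTiles (d : ℕ) (γ : List ℕ) (n : ℕ) : Set (Tile d) :=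
  {A | ∃ (i : Fin (tensorPow γ n).length) (v : Fin d → ℕ),
    (∀ j : Fin d, (j.val < d - 1 → v j < (tensorPow γ n).get i) ∧
      (¬ j.val < d - 1 → v j = 0)) ∧
    A = { lower := fun j => if j.val < d - 1
            then (v j : ℝ) * (((γ.headI : ℝ) ^ n) / ((tensorPow γ n).get i : ℝ))
            else ((((tensorPow γ n).take i.val).map
              fun g => ((γ.headI : ℝ) ^ n) / (g : ℝ)).sum)
          upper := fun j => if j.val < d - 1
            then ((v j : ℝ) + 1) * (((γ.headI : ℝ) ^ n) / ((tensorPow γ n).get i : ℝ))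
            else ((((tensorPow γ n).take i.val).map
              fun g => ((γ.headI : ℝ) ^ n) / (g : ℝ)).sum) +
              ((γ.headI : ℝ) ^ n) / ((tensorPow γ n).get i : ℝ) }}

/-- The infinite nested cube packing `Ŝ = ⋃_n Ŝ_n`. -/
def hatTiling (d : ℕ) (γ : List ℕ) : Set (Tile d) := ⋃ n, hatTiles d γ n

/-- The infinite tangency graph `Ĝ_γ^{(d)}`. -/
def hatGraph (d : ℕ) (γ : List ℕ) : SimpleGraph (hatTiling d γ) :=
  tangencyGraph (hatTiling d γ)

/-! ### Projections -/

/-- The projection of a tile onto its last `d - 1` coordinates. -/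
def projTile {d : ℕ} (A : Tile d) : Tile (d - 1) where
  lower := fun j => A.lower ⟨j.val + 1, by have := j.isLt; omega⟩
  upper := fun j => A.upper ⟨j.val + 1, by have := j.isLt; omega⟩

/-! ### Cubes, facets and neat cube packings -/

/-- The facet of a tile in direction `i` (upper facet if `s = true`, lower if `s = false`). -/
def Tile.facet {d : ℕ} (A : Tile d) (i : Fin d) (s : Bool) :
    Set (EuclideanSpace ℝ (Fin d)) :=
  {x ∈ A.toSet | x i = if s then A.upper i else A.lower i}

/-- A tile is a (nondegenerate) cube when all its side lengths are equal and positive. -/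
def Tile.IsCube {d : ℕ} (A : Tile d) : Prop :=
  (∀ i j, A.len i = A.len j) ∧ ∀ i, 0 < A.len i

/-- The side length of a cube. -/
def Tile.side {d : ℕ} (A : Tile d) : ℝ := sSup (Set.range A.len)

/-- Two cubes are neatly tangent: they have disjoint interiors and, whenever they intersect
along `(d-1)`-dimensional faces `F_A ⊆ A` and `F_B ⊆ B`, either `F_A ⊆ A ∩ B` or
`F_B ⊆ A ∩ B`. -/
def NeatlyTangent {d : ℕ} (A B : Tile d) : Prop :=
  Disjoint A.inner B.inner ∧
    ∀ (i : Fin d) (sa sb : Bool),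
      (Tile.Tangent A B ∨ Tile.Tangent B A) →
      A.toSet ∩ B.toSet ⊆ A.facet i sa ∩ B.facet i sb →
      (A.facet i sa ⊆ A.toSet ∩ B.toSet ∨ B.facet i sb ⊆ A.toSet ∩ B.toSet)

/-- A neat cube packing: a collection of closed axis-parallel cubes, every two of which are
either neatly tangent or disjoint. -/
def IsNeatCubePacking {d : ℕ} (C : Set (Tile d)) : Prop :=
  (∀ A ∈ C, A.IsCube) ∧
    C.Pairwise fun A B => NeatlyTangent A B ∨ Disjoint A.toSet B.toSet

/-- `G` admits an `α`-uniform neat cube packing in `ℝ^d`: `G` is isomorphic to the tangency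
graph of a neat cube packing of aspect ratio at most `α`. -/
def AdmitsNeatCubePacking (d : ℕ) (α : ℝ) {V : Type*} (G : SimpleGraph V) : Prop :=
  ∃ C : Set (Tile d), IsNeatCubePacking C ∧
    (∀ A ∈ C, ∀ B ∈ C, (A.toSet ∩ B.toSet).Nonempty → A.side ≤ α * B.side) ∧
    Nonempty (G ≃g tangencyGraph C)

/-- The cube `[a_1, a_1 + ℓ] × ⋯ × [a_d, a_d + ℓ]`, as a tile. -/
def cubeTile (d : ℕ) (a : EuclideanSpace ℝ (Fin d)) (ℓ : ℝ) : Tile d :=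
  ⟨fun i => a i, fun i => a i + ℓ⟩

/-- `∂_ε C` for the cube `C` with corner `a` and side `ℓ`: the boundary points `x` such that
exactly `2d - 1` of the `2d` facets `F` of `C` satisfy `dist(x, F) > εℓ`. -/
def bdryEps (d : ℕ) (a : EuclideanSpace ℝ (Fin d)) (ℓ ε : ℝ) :
    Set (EuclideanSpace ℝ (Fin d)) :=
  {x ∈ frontier (cubeTile d a ℓ).toSet |
    {p : Fin d × Bool | ε * ℓ < Metric.infDist x ((cubeTile d a ℓ).facet p.1 p.2)}.ncard
      = 2 * d - 1}

/-- The star graph with center `none` and leaves `some i`. -/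
def starGraph (ι : Type) : SimpleGraph (Option ι) where
  Adj x y := (x = none ∧ y ≠ none) ∨ (y = none ∧ x ≠ none)
  symm := by constructor; rintro x y (⟨h1, h2⟩ | ⟨h1, h2⟩) <;> [exact Or.inr ⟨h1, h2⟩; exact Or.inl ⟨h1, h2⟩]
  loopless := by constructor; rintro x (⟨h1, h2⟩ | ⟨h1, h2⟩) <;> exact h2 h1

/-! ### Auxiliary material for `alpha_power_bound` -/

/-- `x` and `y` are consecutive entries of `γ`. -/
def CPair (γ : List ℕ) (x y : ℕ) : Prop :=
  ∃ (i : ℕ) (h : i + 1 < γ.length), γ.get ⟨i, Nat.lt_of_succ_lt h⟩ = x ∧ γ.get ⟨i + 1, h⟩ = y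

/-- The ratio `x/y` is `1` or a ratio of consecutive entries of `γ`. -/
def GPair (γ : List ℕ) (x y : ℕ) : Prop :=
  x = y ∨ ∃ g g', (CPair γ g g' ∨ CPair γ g' g) ∧ x * g' = y * g

lemma cpair_mem {γ : List ℕ} {x y : ℕ} (h : CPair γ x y) : x ∈ γ ∧ y ∈ γ := by
  obtain ⟨i, hi, hx, hy⟩ := h
  exact ⟨hx ▸ List.get_mem _ _, hy ▸ List.get_mem _ _⟩

lemma gpair_symm {γ : List ℕ} {x y : ℕ} (h : GPair γ x y) : GPair γ y x := by
  rcases h with rfl | ⟨g, g', hgg, hm⟩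
  · exact Or.inl rfl
  · exact Or.inr ⟨g', g, hgg.symm, hm.symm⟩

lemma chain'_cpair (γ : List ℕ) : List.Chain' (CPair γ) γ := by
  unfold List.Chain'
  rw [List.isChain_iff_getElem]
  intro i h
  exact ⟨i, by omega, rfl, rfl⟩

lemma cpair_rel {γ : List ℕ} {R : ℕ → ℕ → Prop} (hc : List.Chain' R γ) {x y : ℕ}
    (h : CPair γ x y) : R x y := by
  obtain ⟨i, hi, hx, hy⟩ := h
  have := List.isChain_iff_getElem.mp hc i (by omega)
  rw [← hx, ← hy]
  exact this

lemma tensorSeq_nil (ε : List ℕ) : tensorSeq [] ε = [] := rfl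

lemma tensorSeq_cons (g : ℕ) (γ ε : List ℕ) :
    tensorSeq (g :: γ) ε = ε.map (fun e => g * e) ++ tensorSeq γ ε := by
  simp [tensorSeq]

lemma length_tensorSeq (γ ε : List ℕ) :
    (tensorSeq γ ε).length = γ.length * ε.length := by
  induction γ with
  | nil => simp [tensorSeq]
  | cons g γ' ih => simp [tensorSeq_cons, ih]; ring

lemma tensorSeq_ne_nil {γ ε : List ℕ} (hγ : γ ≠ []) (hε : ε ≠ []) : tensorSeq γ ε ≠ [] := by
  intro h
  have h1 := congrArg List.length h
  rw [length_tensorSeq] at h1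
  simp only [List.length_nil, Nat.mul_eq_zero] at h1
  rcases h1 with h1 | h1
  · exact hγ (List.length_eq_zero_iff.mp h1)
  · exact hε (List.length_eq_zero_iff.mp h1)

lemma head?_tensorSeq (γ : List ℕ) {ε : List ℕ} (hε : ε ≠ []) :
    (tensorSeq γ ε).head? = Option.map₂ (· * ·) γ.head? ε.head? := by
  cases γ with
  | nil => simp [tensorSeq]
  | cons g γ' =>
    cases ε with
    | nil => exact absurd rfl hε
    | cons e ε' => simp [tensorSeq_cons, Option.map₂]

lemma getLast?_tensorSeq (γ ε : List ℕ) :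
    (tensorSeq γ ε).getLast? = Option.map₂ (· * ·) γ.getLast? ε.getLast? := by
  induction γ with
  | nil => simp [tensorSeq, Option.map₂]
  | cons g γ' ih =>
    rw [tensorSeq_cons, List.getLast?_append, ih, List.getLast?_map]
    cases γ' with
    | nil => cases h : ε.getLast? <;> simp [tensorSeq, Option.map₂, h]
    | cons c t =>
      rw [List.getLast?_cons_cons]
      rcases h : (c :: t).getLast? with _ | a
      · simp [List.getLast?_eq_none_iff] at h
      · cases ε.getLast? <;> simp [Option.map₂, h]

lemma chain'_gpair_tensorSeq (γ : List ℕ) {ε : List ℕ} (hε : ε ≠ [])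
    (hfl : ε.head? = ε.getLast?) (hchain : List.Chain' (GPair γ) ε) :
    ∀ γ₂ : List ℕ, List.Chain' (CPair γ) γ₂ → List.Chain' (GPair γ) (tensorSeq γ₂ ε) := by
  obtain ⟨e, ε', rfl⟩ : ∃ e ε', ε = e :: ε' := by
    cases ε with
    | nil => exact absurd rfl hε
    | cons e ε' => exact ⟨e, ε', rfl⟩
  intro γ₂
  induction γ₂ with
  | nil => intro _; simp [tensorSeq]; exact List.isChain_nil
  | cons g t ih =>
    intro hch
    unfold List.Chain' at *
    rw [tensorSeq_cons, List.isChain_append]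
    refine ⟨?_, ih hch.tail, ?_⟩
    · rw [List.isChain_map]
      refine hchain.imp (fun x y hxy => ?_)
      rcases hxy with rfl | ⟨p, q, hpq, hmul⟩
      · exact Or.inl rfl
      · exact Or.inr ⟨p, q, hpq, by rw [Nat.mul_assoc, hmul, Nat.mul_assoc]⟩
    · intro x hx y hy
      cases t with
      | nil => simp [tensorSeq] at hy
      | cons g' t' =>
        rw [head?_tensorSeq _ (by simp : (e :: ε') ≠ [])] at hy
        simp only [List.head?_cons, Option.map₂, Option.mem_def, Option.bind_eq_some_iff,
          Option.map_some, Option.some.injEq] at hy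
        rw [List.getLast?_map, ← hfl] at hx
        simp only [List.head?_cons, Option.map_some, Option.mem_def,
          Option.some.injEq] at hx
        obtain ⟨a, rfl, rfl⟩ := hy
        subst hx
        exact Or.inr ⟨g, g', Or.inl (List.isChain_cons_cons.mp hch).1, by ring⟩

lemma tensorPow_facts (γ : List ℕ) (hne : γ ≠ []) (hpos : ∀ x ∈ γ, 0 < x)
    (hfl : γ.head? = γ.getLast?) (n : ℕ) :
    tensorPow γ n ≠ [] ∧ (∀ x ∈ tensorPow γ n, 0 < x) ∧
      (tensorPow γ n).head? = (tensorPow γ n).getLast? ∧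
      List.Chain' (GPair γ) (tensorPow γ n) := by
  induction n with
  | zero =>
    refine ⟨by simp [tensorPow], by simp [tensorPow], by simp [tensorPow], ?_⟩
    simp [tensorPow]; exact List.isChain_singleton _
  | succ n ih =>
    obtain ⟨h1, h2, h3, h4⟩ := ih
    have hstep : tensorPow γ (n + 1) = tensorSeq γ (tensorPow γ n) := rfl
    refine ⟨hstep ▸ tensorSeq_ne_nil hne h1, ?_, ?_, ?_⟩
    · intro x hx
      rw [hstep] at hx
      simp only [tensorSeq, List.mem_flatMap, List.mem_map] at hx
      obtain ⟨g, hg, e, he, rfl⟩ := hx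
      exact Nat.mul_pos (hpos g hg) (h2 e he)
    · rw [hstep, head?_tensorSeq _ h1, getLast?_tensorSeq, hfl, h3]
    · rw [hstep]
      exact chain'_gpair_tensorSeq γ h1 h3 h4 γ (chain'_cpair γ)
/-- The set of side-length ratios over tangent pairs (the set inside `tilingAlpha`). -/
def ratioSet (d : ℕ) (T : Set (Tile d)) : Set ℝ :=
  {r | ∃ A ∈ T, ∃ B ∈ T, (A ≠ B ∧ (Tile.Tangent A B ∨ Tile.Tangent B A)) ∧
    ∃ j, r = A.len j / B.len j}

lemma tilingAlpha_eq (d : ℕ) (T : Set (Tile d)) :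
    tilingAlpha T = sSup (insert 1 (ratioSet d T)) := rfl

lemma tangent_symm {d : ℕ} {A B : Tile d} (h : A.Tangent B) : B.Tangent A := by
  obtain ⟨i, h1, h2⟩ := h
  refine ⟨i, by rw [max_comm, min_comm]; exact h1,
    fun j hj => by rw [max_comm, min_comm]; exact h2 j hj⟩

lemma one_div_div_one_div {a b : ℝ} (ha : a ≠ 0) (hb : b ≠ 0) : (1/a)/(1/b) = b/a := by
  field_simp

lemma seqTile_lower_last (d : ℕ) (hd : 2 ≤ d) (δ : List ℕ) (k : Fin δ.length)
    (w : Fin d → ℕ) :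
    (seqTile d δ k w).lower ⟨d - 1, by omega⟩ = (k.val : ℝ) / (δ.length : ℝ) := by
  simp [seqTile]

lemma seqTile_upper_last (d : ℕ) (hd : 2 ≤ d) (δ : List ℕ) (k : Fin δ.length)
    (w : Fin d → ℕ) :
    (seqTile d δ k w).upper ⟨d - 1, by omega⟩ = ((k.val : ℝ) + 1) / (δ.length : ℝ) := by
  simp [seqTile]

lemma seqTile_len_lt (d : ℕ) (δ : List ℕ) (k : Fin δ.length) (w : Fin d → ℕ)
    {j : Fin d} (hj : j.val < d - 1) :
    (seqTile d δ k w).len j = 1 / (δ.get k : ℝ) := by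
  simp only [Tile.len, seqTile, if_pos hj]
  rw [div_sub_div_same]
  ring_nf

lemma seqTile_len_last (d : ℕ) (δ : List ℕ) (k : Fin δ.length) (w : Fin d → ℕ)
    {j : Fin d} (hj : ¬ j.val < d - 1) :
    (seqTile d δ k w).len j = 1 / (δ.length : ℝ) := by
  simp only [Tile.len, seqTile, if_neg hj]
  rw [div_sub_div_same]
  ring_nf

/-- Key structure lemma: a side-length ratio of tangent tiles in `seqTiling d δ` is a
ratio of equal or consecutive entries of `δ`. -/
lemma ratio_structure (d : ℕ) (hd : 2 ≤ d) (δ : List ℕ) (hδpos : ∀ x ∈ δ, 0 < x)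
    {A B : Tile d} (hA : A ∈ seqTiling d δ) (hB : B ∈ seqTiling d δ)
    (ht : Tile.Tangent A B ∨ Tile.Tangent B A) (j : Fin d) :
    ∃ x y : ℕ, x ∈ δ ∧ y ∈ δ ∧ (x = y ∨ CPair δ x y ∨ CPair δ y x) ∧
      A.len j / B.len j = (x : ℝ) / (y : ℝ) := by
  obtain ⟨i, v, hv, rfl⟩ := hA
  obtain ⟨i', v', hv', rfl⟩ := hB
  have hbR : (0:ℝ) < (δ.length : ℝ) := by exact_mod_cast i.pos
  have hgi : (0:ℝ) < (δ.get i : ℝ) := by exact_mod_cast hδpos _ (List.get_mem _ _)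
  have hgi' : (0:ℝ) < (δ.get i' : ℝ) := by exact_mod_cast hδpos _ (List.get_mem _ _)
  have ht' : Tile.Tangent (seqTile d δ i v) (seqTile d δ i' v') := ht.elim id tangent_symm
  have key : max ((i.val:ℝ)/(δ.length:ℝ)) ((i'.val:ℝ)/(δ.length:ℝ))
      ≤ min (((i.val:ℝ)+1)/(δ.length:ℝ)) (((i'.val:ℝ)+1)/(δ.length:ℝ)) := by
    obtain ⟨c, hc1, hc2⟩ := ht'
    by_cases hcd : c = (⟨d - 1, by omega⟩ : Fin d)
    · subst hcd
      rw [seqTile_lower_last d hd, seqTile_lower_last d hd, seqTile_upper_last d hd,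
        seqTile_upper_last d hd] at hc1
      exact le_of_eq hc1
    · have h2 := hc2 ⟨d - 1, by omega⟩ (Ne.symm hcd)
      rw [seqTile_lower_last d hd, seqTile_lower_last d hd, seqTile_upper_last d hd,
        seqTile_upper_last d hd] at h2
      exact h2.le
  have h1 : i'.val ≤ i.val + 1 := by
    have h1' : (i'.val:ℝ) ≤ (i.val:ℝ) + 1 :=
      (div_le_div_iff_of_pos_right hbR).mp ((le_max_right _ _).trans (key.trans (min_le_left _ _)))
    exact_mod_cast h1'
  have h2 : i.val ≤ i'.val + 1 := by
    have h2' : (i.val:ℝ) ≤ (i'.val:ℝ) + 1 :=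
      (div_le_div_iff_of_pos_right hbR).mp ((le_max_left _ _).trans (key.trans (min_le_right _ _)))
    exact_mod_cast h2'
  by_cases hj : j.val < d - 1
  · rw [seqTile_len_lt d δ i v hj, seqTile_len_lt d δ i' v' hj]
    rcases Nat.lt_trichotomy i.val i'.val with hlt | heq | hgt
    · have hi' : i'.val = i.val + 1 := by omega
      refine ⟨δ.get i', δ.get i, List.get_mem _ _, List.get_mem _ _,
        Or.inr (Or.inr ⟨i.val, by omega, rfl, ?_⟩), ?_⟩
      · congr 1
        exact Fin.ext hi'.symm
      · exact one_div_div_one_div hgi.ne' hgi'.ne'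
    · have hii : i = i' := Fin.ext heq
      subst hii
      exact ⟨δ.get i, δ.get i, List.get_mem _ _, List.get_mem _ _, Or.inl rfl,
        by rw [one_div_div_one_div hgi.ne' hgi.ne']⟩
    · have hi : i.val = i'.val + 1 := by omega
      refine ⟨δ.get i', δ.get i, List.get_mem _ _, List.get_mem _ _,
        Or.inr (Or.inl ⟨i'.val, by omega, rfl, ?_⟩), ?_⟩
      · congr 1
        exact Fin.ext hi.symm
      · exact one_div_div_one_div hgi.ne' hgi'.ne'
  · rw [seqTile_len_last d δ i v hj, seqTile_len_last d δ i' v' hj]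
    exact ⟨δ.get i, δ.get i, List.get_mem _ _, List.get_mem _ _, Or.inl rfl,
      by rw [one_div_div_one_div hbR.ne' hbR.ne', div_self hgi.ne', div_self hbR.ne']⟩

/-- Realization lemma: ratios of consecutive entries of `γ` occur as tangent-pair
side-length ratios in `seqTiling d γ`. -/
lemma slab_pair_mem (d : ℕ) (hd : 2 ≤ d) (γ : List ℕ) (hpos : ∀ x ∈ γ, 0 < x)
    (I J : Fin γ.length) (hIJ : J.val = I.val + 1) :
    ((γ.get J : ℝ) / (γ.get I : ℝ)) ∈ ratioSet d (seqTiling d γ) ∧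
    ((γ.get I : ℝ) / (γ.get J : ℝ)) ∈ ratioSet d (seqTiling d γ) := by
  have hbR : (0:ℝ) < (γ.length : ℝ) := by exact_mod_cast I.pos
  have hgI : (0:ℝ) < (γ.get I : ℝ) := by exact_mod_cast hpos _ (List.get_mem _ _)
  have hgJ : (0:ℝ) < (γ.get J : ℝ) := by exact_mod_cast hpos _ (List.get_mem _ _)
  set A := seqTile d γ I (fun _ => 0) with hAdef
  set B := seqTile d γ J (fun _ => 0) with hBdef
  have hAmem : A ∈ seqTiling d γ :=
    ⟨I, fun _ => 0, fun _ => ⟨fun _ => hpos _ (List.get_mem _ _), fun _ => rfl⟩, rfl⟩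
  have hBmem : B ∈ seqTiling d γ :=
    ⟨J, fun _ => 0, fun _ => ⟨fun _ => hpos _ (List.get_mem _ _), fun _ => rfl⟩, rfl⟩
  have hAB : A ≠ B := by
    intro h
    have h' := congrArg (fun t : Tile d => t.lower ⟨d - 1, by omega⟩) h
    simp only [hAdef, hBdef] at h'
    rw [seqTile_lower_last d hd, seqTile_lower_last d hd] at h'
    have h'' : I.val = J.val := by
      field_simp at h'
      exact_mod_cast h'
    omega
  have htang : Tile.Tangent A B := by
    refine ⟨⟨d - 1, by omega⟩, ?_, ?_⟩
    · rw [hAdef, hBdef, seqTile_lower_last d hd, seqTile_lower_last d hd,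
        seqTile_upper_last d hd, seqTile_upper_last d hd, hIJ]
      push_cast
      rw [max_eq_right (by gcongr <;> linarith), min_eq_left (by gcongr <;> linarith)]
    · intro j hj
      have hjd : j.val < d - 1 := by
        have hne : j.val ≠ d - 1 := fun h => hj (Fin.ext h)
        omega
      show max (A.lower j) (B.lower j) < min (A.upper j) (B.upper j)
      rw [hAdef, hBdef]
      simp only [seqTile, if_pos hjd, Nat.cast_zero, zero_div, zero_add, max_self]
      exact lt_min (by positivity) (by positivity)
  have hlenA : A.len ⟨0, by omega⟩ = 1 / (γ.get I : ℝ) :=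
    @seqTile_len_lt d γ I (fun _ => 0) ⟨0, by omega⟩ (by show 0 < d - 1; omega)
  have hlenB : B.len ⟨0, by omega⟩ = 1 / (γ.get J : ℝ) :=
    @seqTile_len_lt d γ J (fun _ => 0) ⟨0, by omega⟩ (by show 0 < d - 1; omega)
  constructor
  · exact ⟨A, hAmem, B, hBmem, ⟨hAB, Or.inl htang⟩, ⟨0, by omega⟩,
      by rw [hlenA, hlenB, one_div_div_one_div hgI.ne' hgJ.ne']⟩
  · exact ⟨B, hBmem, A, hAmem, ⟨hAB.symm, Or.inr htang⟩, ⟨0, by omega⟩,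
      by rw [hlenA, hlenB, one_div_div_one_div hgJ.ne' hgI.ne']⟩

lemma cpair_ratio_mem (d : ℕ) (hd : 2 ≤ d) (γ : List ℕ) (hpos : ∀ x ∈ γ, 0 < x)
    {a b : ℕ} (h : CPair γ a b) :
    ((a:ℝ)/(b:ℝ)) ∈ ratioSet d (seqTiling d γ) ∧
    ((b:ℝ)/(a:ℝ)) ∈ ratioSet d (seqTiling d γ) := by
  obtain ⟨i, hi, ha, hb⟩ := h
  have := slab_pair_mem d hd γ hpos ⟨i, by omega⟩ ⟨i + 1, hi⟩ rfl
  rw [ha, hb] at this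
  exact ⟨this.2, this.1⟩


/-- (Corollary 3.7). If `γ_1 = γ_b`, then `α_{T^{(d)}_{γ^{⊗n}}} ≤ α_{T^{(d)}_γ}` for `n ≥ 1`. -/
theorem alpha_power_bound (d : ℕ) (hd : 2 ≤ d) (γ : List ℕ) (hne : γ ≠ [])
    (hpos : ∀ x ∈ γ, 0 < x) (hfl : γ.head? = γ.getLast?) (n : ℕ) (hn : 1 ≤ n) :
    tilingAlpha (seqTiling d (tensorPow γ n)) ≤ tilingAlpha (seqTiling d γ) := by
  obtain ⟨hδne, hδpos, hδfl, hδchain⟩ := tensorPow_facts γ hne hpos hfl n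
  rw [tilingAlpha_eq, tilingAlpha_eq]
  have hub : ∀ r ∈ insert (1:ℝ) (ratioSet d (seqTiling d γ)), r ≤ (γ.sum : ℝ) + 1 := by
    intro r hr
    have hsum : (0:ℝ) ≤ (γ.sum : ℝ) := Nat.cast_nonneg _
    rcases hr with rfl | hr
    · linarith
    · obtain ⟨A, hA, B, hB, ⟨hAB, ht⟩, j, rfl⟩ := hr
      obtain ⟨x, y, hxm, hym, _, hr'⟩ := ratio_structure d hd γ hpos hA hB ht j
      rw [hr']
      have hy1 : (1:ℝ) ≤ (y:ℝ) := by exact_mod_cast hpos y hym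
      have hx : (x:ℝ) ≤ (γ.sum:ℝ) := by
        exact_mod_cast List.single_le_sum (fun _ _ => Nat.zero_le _) x hxm
      calc (x:ℝ)/(y:ℝ) ≤ (x:ℝ) := div_le_self (Nat.cast_nonneg x) hy1
        _ ≤ _ := by linarith
  have hbdd : BddAbove (insert (1:ℝ) (ratioSet d (seqTiling d γ))) := ⟨_, hub⟩
  have h1 : (1:ℝ) ≤ sSup (insert 1 (ratioSet d (seqTiling d γ))) :=
    le_csSup hbdd (Set.mem_insert _ _)
  refine Real.sSup_le ?_ (le_trans zero_le_one h1)
  intro r hr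
  rcases hr with rfl | hr
  · exact h1
  · obtain ⟨A, hA, B, hB, ⟨hAB, ht⟩, j, rfl⟩ := hr
    obtain ⟨x, y, hxm, hym, hcase, hr'⟩ := ratio_structure d hd _ hδpos hA hB ht j
    rw [hr']
    have hx0 : (0:ℝ) < x := by exact_mod_cast hδpos x hxm
    have hy0 : (0:ℝ) < y := by exact_mod_cast hδpos y hym
    have hgp : GPair γ x y := by
      rcases hcase with rfl | hc | hc
      · exact Or.inl rfl
      · exact cpair_rel hδchain hc
      · exact gpair_symm (cpair_rel hδchain hc)
    rcases hgp with rfl | ⟨g, g', hgg, hmul⟩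
    · rw [div_self hx0.ne']
      exact h1
    · have hg : g ∈ γ ∧ g' ∈ γ := by
        rcases hgg with h' | h'
        · exact cpair_mem h'
        · exact (cpair_mem h').symm
      have hg'0 : (0:ℝ) < g' := by exact_mod_cast hpos g' hg.2
      have heq : (x:ℝ)/(y:ℝ) = (g:ℝ)/(g':ℝ) := by
        rw [div_eq_div_iff hy0.ne' hg'0.ne']
        exact_mod_cast hmul.trans (Nat.mul_comm y g)
      rw [heq]
      rcases hgg with h' | h'
      · exact le_csSup hbdd (Set.mem_insert_of_mem _ (cpair_ratio_mem d hd γ hpos h').1)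
      · exact le_csSup hbdd (Set.mem_insert_of_mem _ (cpair_ratio_mem d hd γ hpos h').2)

end
end

section
/- Let d ≥ 2 and let γ = ⟨γ_1,…,γ_b⟩ be a sequence of positive integers with γ_1 = γ_b = b. Then for every n ≥ 0, b^n − 1 ≤ diam(G(T^{(d)}_{γ^{⊗n}})) ≤ (d+1)·b^n. -/
noncomputable section
open Classical

/-! ### Auxiliary material for `diam_bounds` -/

namespace DiamBoundsAux

open SimpleGraph

/-- The grid-position predicate from `seqTiling`. -/
def goodVec (d : ℕ) (L : List ℕ) (i : Fin L.length) (v : Fin d → ℕ) : Prop :=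
  ∀ j : Fin d, (j.val < d - 1 → v j < L.get i) ∧ (¬ j.val < d - 1 → v j = 0)

variable {d : ℕ} {L : List ℕ}

lemma mem_seqTiling {i : Fin L.length} {v : Fin d → ℕ} (hv : goodVec d L i v) :
    seqTile d L i v ∈ seqTiling d L := ⟨i, v, hv, rfl⟩

/-- The vertex of the tangency graph corresponding to slab `i`, position `v`. -/
def vert (i : Fin L.length) (v : Fin d → ℕ) (hv : goodVec d L i v) : ↥(seqTiling d L) :=
  ⟨seqTile d L i v, mem_seqTiling hv⟩

@[simp] lemma vert_coe {i : Fin L.length} {v : Fin d → ℕ} {hv : goodVec d L i v} :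
    ((vert i v hv : ↥(seqTiling d L)) : Tile d) = seqTile d L i v := rfl

lemma lower_lt {i : Fin L.length} {v : Fin d → ℕ} {j : Fin d} (hj : j.val < d - 1) :
    (seqTile d L i v).lower j = (v j : ℝ) / (L.get i : ℝ) := by simp [seqTile, hj]

lemma upper_lt {i : Fin L.length} {v : Fin d → ℕ} {j : Fin d} (hj : j.val < d - 1) :
    (seqTile d L i v).upper j = ((v j : ℝ) + 1) / (L.get i : ℝ) := by simp [seqTile, hj]

lemma lower_ge {i : Fin L.length} {v : Fin d → ℕ} {j : Fin d} (hj : ¬ j.val < d - 1) :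
    (seqTile d L i v).lower j = (i.val : ℝ) / (L.length : ℝ) := by simp [seqTile, hj]

lemma upper_ge {i : Fin L.length} {v : Fin d → ℕ} {j : Fin d} (hj : ¬ j.val < d - 1) :
    (seqTile d L i v).upper j = ((i.val : ℝ) + 1) / (L.length : ℝ) := by simp [seqTile, hj]

lemma slab_eq_of_seqTile_eq (hd : 2 ≤ d) (hm : 0 < L.length) {i i' : Fin L.length}
    {v v' : Fin d → ℕ} (h : seqTile d L i v = seqTile d L i' v') : (i : ℕ) = (i' : ℕ) := by
  have hj : ¬ ((⟨d - 1, by omega⟩ : Fin d) : ℕ) < d - 1 := by simp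
  have h1 := congrFun (congrArg Tile.lower h) ⟨d - 1, by omega⟩
  rw [lower_ge hj, lower_ge hj] at h1
  have hmR : (0 : ℝ) < (L.length : ℝ) := by exact_mod_cast hm
  rw [div_eq_div_iff (ne_of_gt hmR) (ne_of_gt hmR)] at h1
  have := mul_right_cancel₀ (ne_of_gt hmR) h1
  exact_mod_cast this

/-- Vertical adjacency: tile `w` in slab `i` is adjacent to tile `v` in slab `i' = i+1`
when their horizontal projections strictly overlap. -/
lemma Adj_vert (hd : 2 ≤ d) (hpos : ∀ x ∈ L, 0 < x)
    {i i' : Fin L.length} (hii : (i' : ℕ) = (i : ℕ) + 1)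
    {w v : Fin d → ℕ} (hw : goodVec d L i w) (hv : goodVec d L i' v)
    (h1 : ∀ j : Fin d, j.val < d - 1 → w j * L.get i' ≤ v j * L.get i)
    (h2 : ∀ j : Fin d, j.val < d - 1 → v j * L.get i < (w j + 1) * L.get i') :
    (tangencyGraph (seqTiling d L)).Adj (vert i w hw) (vert i' v hv) := by
  have hm : 0 < L.length := i.pos
  have hmR : (0 : ℝ) < (L.length : ℝ) := by exact_mod_cast hm
  have haN : 0 < L.get i := hpos _ (L.get_mem i)
  have hbN : 0 < L.get i' := hpos _ (L.get_mem i')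
  have ha : (0 : ℝ) < (L.get i : ℝ) := by exact_mod_cast haN
  have hb : (0 : ℝ) < (L.get i' : ℝ) := by exact_mod_cast hbN
  have hne : vert i w hw ≠ vert i' v hv := by
    intro h
    have := slab_eq_of_seqTile_eq hd hm (congrArg Subtype.val h)
    omega
  refine (⟨hne, Or.inl ⟨⟨d - 1, by omega⟩, ?_, ?_⟩⟩ : _ ≠ _ ∧ (Tile.Tangent ((vert i w hw : ↥(seqTiling d L)) : Tile d) ((vert i' v hv : ↥(seqTiling d L)) : Tile d) ∨ _))
  · have hj : ¬ ((⟨d - 1, by omega⟩ : Fin d) : ℕ) < d - 1 := by simp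
    simp only [vert_coe]
    rw [lower_ge hj, lower_ge hj, upper_ge hj, upper_ge hj]
    have hiiR : ((i' : ℕ) : ℝ) = ((i : ℕ) : ℝ) + 1 := by exact_mod_cast hii
    rw [hiiR]
    rw [max_eq_right (by gcongr <;> linarith), min_eq_left (by gcongr <;> linarith)]
  · intro j hj
    have hjv : j.val < d - 1 := by
      have : j.val ≠ d - 1 := fun h => hj (Fin.ext h)
      have := j.isLt; omega
    simp only [vert_coe]
    rw [lower_lt hjv, lower_lt hjv, upper_lt hjv, upper_lt hjv]
    apply max_lt <;> apply lt_min
    · rw [div_lt_div_iff₀ ha ha]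
      have : (w j : ℝ) < (w j : ℝ) + 1 := by linarith
      nlinarith
    · rw [div_lt_div_iff₀ ha hb]
      have hn : w j * L.get i' < (v j + 1) * L.get i := by
        calc w j * L.get i' ≤ v j * L.get i := h1 j hjv
          _ < (v j + 1) * L.get i := by
              exact mul_lt_mul_of_pos_right (Nat.lt_succ_self _) haN
      exact_mod_cast hn
    · rw [div_lt_div_iff₀ hb ha]
      exact_mod_cast h2 j hjv
    · rw [div_lt_div_iff₀ hb hb]
      have : (v j : ℝ) < (v j : ℝ) + 1 := by linarith
      nlinarith

/-- Horizontal adjacency within a slab: `v'` is obtained from `v` by a `+1` step in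
coordinate `k`. -/
lemma Adj_horiz (hd : 2 ≤ d) (hpos : ∀ x ∈ L, 0 < x)
    {i : Fin L.length} {v v' : Fin d → ℕ} {k : Fin d}
    (hk : k.val < d - 1) (hkv : v' k = v k + 1) (hid : ∀ j, j ≠ k → v' j = v j)
    (hv : goodVec d L i v) (hv' : goodVec d L i v') :
    (tangencyGraph (seqTiling d L)).Adj (vert i v hv) (vert i v' hv') := by
  have hm : 0 < L.length := i.pos
  have hmR : (0 : ℝ) < (L.length : ℝ) := by exact_mod_cast hm
  have haN : 0 < L.get i := hpos _ (L.get_mem i)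
  have ha : (0 : ℝ) < (L.get i : ℝ) := by exact_mod_cast haN
  have hne : vert i v hv ≠ vert i v' hv' := by
    intro h
    have h1 := congrFun (congrArg Tile.lower (congrArg Subtype.val h)) k
    simp only [vert_coe] at h1
    rw [lower_lt hk, lower_lt hk, div_eq_div_iff (ne_of_gt ha) (ne_of_gt ha)] at h1
    have h2 := mul_right_cancel₀ (ne_of_gt ha) h1
    have h3 : v k = v' k := by exact_mod_cast h2
    omega
  refine (⟨hne, Or.inl ⟨k, ?_, ?_⟩⟩ : _ ≠ _ ∧ (Tile.Tangent ((vert i v hv : ↥(seqTiling d L)) : Tile d) ((vert i v' hv' : ↥(seqTiling d L)) : Tile d) ∨ _))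
  · simp only [vert_coe]
    rw [lower_lt hk, lower_lt hk, upper_lt hk, upper_lt hk, hkv]
    push_cast
    rw [max_eq_right (by gcongr <;> linarith), min_eq_left (by gcongr <;> linarith)]
  · intro j hj
    simp only [vert_coe]
    by_cases hjv : j.val < d - 1
    · rw [lower_lt hjv, lower_lt hjv, upper_lt hjv, upper_lt hjv, hid j hj, max_self, min_self]
      gcongr <;> linarith
    · rw [lower_ge hjv, lower_ge hjv, upper_ge hjv, upper_ge hjv, max_self, min_self]
      gcongr <;> linarith

/-- Descend from slab `a` to slab `0` in at most `a` steps. -/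
lemma walk_to_base (hd : 2 ≤ d) (hpos : ∀ x ∈ L, 0 < x) (hm : 0 < L.length) :
    ∀ (a : ℕ) (ha : a < L.length) (v : Fin d → ℕ) (hv : goodVec d L ⟨a, ha⟩ v),
    ∃ (w : Fin d → ℕ) (hw : goodVec d L ⟨0, hm⟩ w)
      (p : (tangencyGraph (seqTiling d L)).Walk (vert ⟨a, ha⟩ v hv) (vert ⟨0, hm⟩ w hw)),
      p.length ≤ a := by
  intro a
  induction a with
  | zero =>
    intro ha v hv
    exact ⟨v, hv, Walk.nil, by simp⟩
  | succ a ih =>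
    intro ha v hv
    have ha' : a < L.length := by omega
    have hbN : 0 < L.get ⟨a + 1, ha⟩ := hpos _ (L.get_mem _)
    have haN : 0 < L.get ⟨a, ha'⟩ := hpos _ (L.get_mem _)
    let w : Fin d → ℕ := fun j =>
      if j.val < d - 1 then v j * L.get ⟨a, ha'⟩ / L.get ⟨a + 1, ha⟩ else 0
    have hw : goodVec d L ⟨a, ha'⟩ w := by
      intro j
      constructor
      · intro hj
        simp only [w, if_pos hj]
        rw [Nat.div_lt_iff_lt_mul hbN]
        have hvj : v j < L.get ⟨a + 1, ha⟩ := (hv j).1 hj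
        calc v j * L.get ⟨a, ha'⟩ < L.get ⟨a + 1, ha⟩ * L.get ⟨a, ha'⟩ :=
              mul_lt_mul_of_pos_right hvj haN
          _ = L.get ⟨a, ha'⟩ * L.get ⟨a + 1, ha⟩ := by ring
      · intro hj; simp only [w, if_neg hj]
    have hadj : (tangencyGraph (seqTiling d L)).Adj
        (vert ⟨a, ha'⟩ w hw) (vert ⟨a + 1, ha⟩ v hv) := by
      apply Adj_vert hd hpos rfl
      · intro j hj
        simp only [w, if_pos hj]
        exact Nat.div_mul_le_self (v j * L.get ⟨a, ha'⟩) (L.get ⟨a + 1, ha⟩)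
      · intro j hj
        simp only [w, if_pos hj]
        rw [← Nat.div_lt_iff_lt_mul hbN]
        exact Nat.lt_succ_self _
    obtain ⟨w0, hw0, p, hp⟩ := ih ha' w hw
    refine ⟨w0, hw0, Walk.cons hadj.symm p, ?_⟩
    rw [Walk.length_cons]; omega

/-- Replacing the value at one index by a smaller one decreases the sum. -/
lemma sum_update_lt {n : ℕ} (f f' : Fin n → ℕ) (j : Fin n)
    (h : ∀ x, x ≠ j → f' x = f x) (hj : f' j < f j) :
    (∑ x, f' x) < ∑ x, f x := by
  classical
  rw [← Finset.add_sum_erase _ f' (Finset.mem_univ j),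
      ← Finset.add_sum_erase _ f (Finset.mem_univ j)]
  have he : ∑ x ∈ Finset.univ.erase j, f' x = ∑ x ∈ Finset.univ.erase j, f x :=
    Finset.sum_congr rfl fun x hx => h x (Finset.mem_erase.mp hx).1
  omega

/-- Walk within slab `0` between two grid positions, with length at most the `ℓ¹` distance. -/
lemma walk_horiz (hd : 2 ≤ d) (hpos : ∀ x ∈ L, 0 < x) (hm : 0 < L.length) :
    ∀ (s : ℕ) (v w : Fin d → ℕ) (hv : goodVec d L ⟨0, hm⟩ v) (hw : goodVec d L ⟨0, hm⟩ w),
    (∑ j : Fin d, ((v j - w j) + (w j - v j))) ≤ s →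
    ∃ p : (tangencyGraph (seqTiling d L)).Walk (vert ⟨0, hm⟩ v hv) (vert ⟨0, hm⟩ w hw),
      p.length ≤ s := by
  intro s
  induction s with
  | zero =>
    intro v w hv hw hs
    have hvw : v = w := by
      funext j
      have h0 : (v j - w j) + (w j - v j) = 0 := by
        have := Finset.sum_le_sum_of_subset (Finset.subset_univ {j})
          (f := fun j => (v j - w j) + (w j - v j))
        simp only [Finset.sum_singleton] at this
        omega
      omega
    subst hvw
    exact ⟨Walk.nil, by simp⟩
  | succ s ih =>
    intro v w hv hw hs
    by_cases hvw : v = w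
    · subst hvw; exact ⟨Walk.nil, by simp⟩
    · have : ∃ j, v j ≠ w j := Function.ne_iff.mp hvw
      obtain ⟨j, hj⟩ := this
      have hjv : j.val < d - 1 := by
        by_contra hc
        have := (hv j).2 hc
        have := (hw j).2 hc
        omega
      rcases Nat.lt_or_ge (v j) (w j) with hlt | hge
      · -- move v up at j
        set v' : Fin d → ℕ := Function.update v j (v j + 1) with hv'def
        have hv' : goodVec d L ⟨0, hm⟩ v' := by
          intro j'
          by_cases hjj : j' = j
          · subst hjj
            constructor
            · intro hj'
              simp only [v', Function.update_self]
              have := (hw j').1 hj'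
              omega
            · intro hj'; exact absurd hjv hj'
          · simp only [v', Function.update_of_ne hjj]
            exact hv j'
        have hadj : (tangencyGraph (seqTiling d L)).Adj (vert ⟨0, hm⟩ v hv)
            (vert ⟨0, hm⟩ v' hv') :=
          Adj_horiz hd hpos hjv (by simp [v']) (fun j' hjj => by
            simp [v', Function.update_of_ne hjj]) hv hv'
        have hsum' : (∑ j', ((v' j' - w j') + (w j' - v' j'))) ≤ s := by
          have hdec : (∑ j', ((v' j' - w j') + (w j' - v' j'))) <
              ∑ j', ((v j' - w j') + (w j' - v j')) :=
            sum_update_lt (fun j' => (v j' - w j') + (w j' - v j'))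
              (fun j' => (v' j' - w j') + (w j' - v' j')) j
              (fun x hx => by simp [v', Function.update_of_ne hx])
              (by simp only [v', Function.update_self]; omega)
          omega
        obtain ⟨p, hp⟩ := ih v' w hv' hw hsum'
        exact ⟨Walk.cons hadj p, by rw [Walk.length_cons]; omega⟩
      · -- move v down at j
        have hgt : w j < v j := by omega
        set v' : Fin d → ℕ := Function.update v j (v j - 1) with hv'def
        have hv' : goodVec d L ⟨0, hm⟩ v' := by
          intro j'
          by_cases hjj : j' = j
          · subst hjj
            constructor
            · intro hj'
              simp only [v', Function.update_self]
              have := (hv j').1 hj'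
              omega
            · intro hj'; exact absurd hjv hj'
          · simp only [v', Function.update_of_ne hjj]
            exact hv j'
        have hadj : (tangencyGraph (seqTiling d L)).Adj (vert ⟨0, hm⟩ v' hv')
            (vert ⟨0, hm⟩ v hv) :=
          Adj_horiz hd hpos hjv (by simp only [v', Function.update_self]; omega)
            (fun j' hjj => by simp [v', Function.update_of_ne hjj]) hv' hv
        have hsum' : (∑ j', ((v' j' - w j') + (w j' - v' j'))) ≤ s := by
          have hdec : (∑ j', ((v' j' - w j') + (w j' - v' j'))) <
              ∑ j', ((v j' - w j') + (w j' - v j')) :=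
            sum_update_lt (fun j' => (v j' - w j') + (w j' - v j'))
              (fun j' => (v' j' - w j') + (w j' - v' j')) j
              (fun x hx => by simp [v', Function.update_of_ne hx])
              (by simp only [v', Function.update_self]; omega)
          omega
        obtain ⟨p, hp⟩ := ih v' w hv' hw hsum'
        exact ⟨Walk.cons hadj.symm p, by rw [Walk.length_cons]; omega⟩

lemma sum_ite_range (c k : ℕ) : ∀ n, c ≤ n →
    (∑ i ∈ Finset.range n, if i < c then k else 0) = c * k := by
  intro n
  induction n with
  | zero => intro h; interval_cases c; simp
  | succ n ih =>
    intro h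
    rw [Finset.sum_range_succ]
    rcases Nat.lt_or_ge n c with hc | hc
    · have hc' : c = n + 1 := by omega
      subst hc'
      rw [if_pos hc]
      have hcong : ∀ i ∈ Finset.range n, (if i < n + 1 then k else 0) = k := by
        intro i hi
        rw [if_pos]
        have := Finset.mem_range.mp hi; omega
      rw [Finset.sum_congr rfl hcong, Finset.sum_const, Finset.card_range, smul_eq_mul]
      ring
    · rw [if_neg (by omega), ih hc, add_zero]

/-- Any two vertices are joined by a walk of length at most `(d+1)·|L|`. -/
lemma exists_short_walk (hd : 2 ≤ d) (hpos : ∀ x ∈ L, 0 < x) (hm : 0 < L.length)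
    (g0 : L.get ⟨0, hm⟩ = L.length) (x y : ↥(seqTiling d L)) :
    ∃ p : (tangencyGraph (seqTiling d L)).Walk x y, p.length ≤ (d + 1) * L.length := by
  obtain ⟨A, hA⟩ := x
  obtain ⟨ix, vx, hvx, rfl⟩ := hA
  obtain ⟨B, hB⟩ := y
  obtain ⟨iy, vy, hvy, rfl⟩ := hB
  obtain ⟨wx, hwx, px, hpx⟩ := walk_to_base hd hpos hm ix.val ix.isLt vx hvx
  obtain ⟨wy, hwy, py, hpy⟩ := walk_to_base hd hpos hm iy.val iy.isLt vy hvy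
  have hsum : (∑ j : Fin d, ((wx j - wy j) + (wy j - wx j))) ≤ (d - 1) * (L.length - 1) := by
    have hterm : ∀ j : Fin d, (wx j - wy j) + (wy j - wx j) ≤
        if (j : ℕ) < d - 1 then L.length - 1 else 0 := by
      intro j
      by_cases hj : j.val < d - 1
      · rw [if_pos hj]
        have h1 := (hwx j).1 hj
        have h2 := (hwy j).1 hj
        rw [g0] at h1 h2
        omega
      · rw [if_neg hj]
        have := (hwx j).2 hj
        have := (hwy j).2 hj
        omega
    calc (∑ j : Fin d, ((wx j - wy j) + (wy j - wx j)))
        ≤ ∑ j : Fin d, if (j : ℕ) < d - 1 then L.length - 1 else 0 :=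
          Finset.sum_le_sum fun j _ => hterm j
      _ = (d - 1) * (L.length - 1) := by
          rw [Fin.sum_univ_eq_sum_range (fun i => if i < d - 1 then L.length - 1 else 0) d]
          exact sum_ite_range _ _ _ (by omega)
  obtain ⟨ph, hph⟩ := walk_horiz hd hpos hm ((d - 1) * (L.length - 1)) wx wy hwx hwy hsum
  refine ⟨(px.append (ph.append py.reverse)).copy rfl rfl, ?_⟩
  show (px.append (ph.append py.reverse)).length ≤ _
  rw [Walk.length_append, Walk.length_append, Walk.length_reverse]
  have e1 : ix.val ≤ L.length - 1 := by have := ix.isLt; omega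
  have e2 : iy.val ≤ L.length - 1 := by have := iy.isLt; omega
  calc px.length + (ph.length + py.length)
      ≤ (L.length - 1) + ((d - 1) * (L.length - 1) + (L.length - 1)) := by
        apply Nat.add_le_add (le_trans hpx e1)
        exact Nat.add_le_add hph (le_trans hpy e2)
    _ = ((d - 1) + 2) * (L.length - 1) := by ring
    _ = (d + 1) * (L.length - 1) := by rw [show d - 1 + 2 = d + 1 by omega]
    _ ≤ (d + 1) * L.length := Nat.mul_le_mul_left _ (Nat.sub_le _ _)

/-! ### Lower bound machinery -/

lemma mem_iff {A : Tile d} : A ∈ seqTiling d L ↔ ∃ (i : Fin L.length) (v : Fin d → ℕ),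
    (∀ j : Fin d, (j.val < d - 1 → v j < L.get i) ∧ (¬ j.val < d - 1 → v j = 0)) ∧
    A = seqTile d L i v := Iff.rfl

/-- The slab index of a vertex. -/
noncomputable def slabIdx (x : ↥(seqTiling d L)) : ℕ :=
  ((mem_iff.mp x.2).choose : Fin L.length).val

lemma slabIdx_spec (x : ↥(seqTiling d L)) :
    ∃ (i : Fin L.length) (v : Fin d → ℕ), (i : ℕ) = slabIdx x ∧ x.1 = seqTile d L i v := by
  obtain ⟨v, hv, he⟩ := (mem_iff.mp x.2).choose_spec
  exact ⟨(mem_iff.mp x.2).choose, v, rfl, he⟩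

lemma tangent_slab (hd : 2 ≤ d) (hm : 0 < L.length) {i i' : Fin L.length} {v w : Fin d → ℕ}
    (h : Tile.Tangent (seqTile d L i v) (seqTile d L i' w)) :
    (i' : ℕ) ≤ (i : ℕ) + 1 ∧ (i : ℕ) ≤ (i' : ℕ) + 1 := by
  obtain ⟨j0, hj0, hrest⟩ := h
  have hmR : (0 : ℝ) < (L.length : ℝ) := by exact_mod_cast hm
  have hjd : ¬ ((⟨d - 1, by omega⟩ : Fin d) : ℕ) < d - 1 := by simp
  have key : max ((i.val : ℝ) / L.length) ((i'.val : ℝ) / L.length) ≤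
      min (((i.val : ℝ) + 1) / L.length) (((i'.val : ℝ) + 1) / L.length) := by
    by_cases hjj : j0 = (⟨d - 1, by omega⟩ : Fin d)
    · subst hjj
      rw [lower_ge hjd, lower_ge hjd, upper_ge hjd, upper_ge hjd] at hj0
      exact le_of_eq hj0
    · have hlt := hrest ⟨d - 1, by omega⟩ (fun h => hjj h.symm)
      rw [lower_ge hjd, lower_ge hjd, upper_ge hjd, upper_ge hjd] at hlt
      exact le_of_lt hlt
  constructor
  · have h1 : ((i' : ℕ) : ℝ) / L.length ≤ (((i : ℕ) : ℝ) + 1) / L.length :=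
      le_trans (le_max_right _ _) (le_trans key (min_le_left _ _))
    rw [div_le_div_iff₀ hmR hmR] at h1
    have h2 : ((i' : ℕ)) * L.length ≤ ((i : ℕ) + 1) * L.length := by exact_mod_cast h1
    exact Nat.le_of_mul_le_mul_right h2 hm
  · have h1 : ((i : ℕ) : ℝ) / L.length ≤ (((i' : ℕ) : ℝ) + 1) / L.length :=
      le_trans (le_max_left _ _) (le_trans key (min_le_right _ _))
    rw [div_le_div_iff₀ hmR hmR] at h1
    have h2 : ((i : ℕ)) * L.length ≤ ((i' : ℕ) + 1) * L.length := by exact_mod_cast h1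
    exact Nat.le_of_mul_le_mul_right h2 hm

lemma adj_slab (hd : 2 ≤ d) (hm : 0 < L.length) {x y : ↥(seqTiling d L)}
    (h : (tangencyGraph (seqTiling d L)).Adj x y) : slabIdx y ≤ slabIdx x + 1 := by
  obtain ⟨ix, vx, hix, hx⟩ := slabIdx_spec x
  obtain ⟨iy, vy, hiy, hy⟩ := slabIdx_spec y
  obtain ⟨-, ht | ht⟩ := h
  · rw [hx, hy] at ht
    have := tangent_slab hd hm ht
    omega
  · rw [hx, hy] at ht
    have := tangent_slab hd hm ht
    omega

lemma walk_slab (hd : 2 ≤ d) (hm : 0 < L.length) :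
    ∀ {x y : ↥(seqTiling d L)} (p : (tangencyGraph (seqTiling d L)).Walk x y),
    slabIdx y ≤ slabIdx x + p.length := by
  intro x y p
  induction p with
  | nil => simp
  | cons h q ih =>
    have := adj_slab hd hm h
    rw [Walk.length_cons]
    omega

lemma slabIdx_vert (hd : 2 ≤ d) (hm : 0 < L.length) {i : Fin L.length} {v : Fin d → ℕ}
    {hv : goodVec d L i v} : slabIdx (vert i v hv) = (i : ℕ) := by
  obtain ⟨i', v', hi', he⟩ := slabIdx_spec (vert i v hv)
  have : (i : ℕ) = (i' : ℕ) := slab_eq_of_seqTile_eq hd hm he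
  omega

/-- The main bound, for a general list whose head equals its length. -/
lemma main_bounds (d : ℕ) (hd : 2 ≤ d) (L : List ℕ) (hpos : ∀ x ∈ L, 0 < x)
    (hhead : L.head? = some L.length) :
    L.length - 1 ≤ (tangencyGraph (seqTiling d L)).diam ∧
    (tangencyGraph (seqTiling d L)).diam ≤ (d + 1) * L.length := by
  have hm : 0 < L.length := by
    cases L with
    | nil => simp at hhead
    | cons a t => simp
  have g0 : L.get ⟨0, hm⟩ = L.length := by
    cases L with
    | nil => simp at hhead
    | cons a t => simpa using hhead
  have hwalk := exists_short_walk hd hpos hm g0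
  have hupper_e : (tangencyGraph (seqTiling d L)).ediam ≤ (((d + 1) * L.length : ℕ) : ℕ∞) := by
    apply SimpleGraph.ediam_le_of_edist_le
    intro u v
    obtain ⟨p, hp⟩ := hwalk u v
    exact le_trans (SimpleGraph.edist_le p) (by exact_mod_cast hp)
  have hne : (tangencyGraph (seqTiling d L)).ediam ≠ ⊤ :=
    ne_top_of_le_ne_top (ENat.coe_ne_top _) hupper_e
  have hupper : (tangencyGraph (seqTiling d L)).diam ≤ (d + 1) * L.length := by
    have := ENat.toNat_le_toNat hupper_e (ENat.coe_ne_top _)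
    rwa [ENat.toNat_coe] at this
  refine ⟨?_, hupper⟩
  have h0 : goodVec d L ⟨0, hm⟩ (fun _ => 0) :=
    fun j => ⟨fun _ => hpos _ (L.get_mem _), fun _ => rfl⟩
  have h1 : goodVec d L ⟨L.length - 1, by omega⟩ (fun _ => 0) :=
    fun j => ⟨fun _ => hpos _ (L.get_mem _), fun _ => rfl⟩
  set x0 : ↥(seqTiling d L) := vert ⟨0, hm⟩ (fun _ => 0) h0 with hx0
  set x1 : ↥(seqTiling d L) := vert ⟨L.length - 1, by omega⟩ (fun _ => 0) h1 with hx1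
  have hr : (tangencyGraph (seqTiling d L)).Reachable x0 x1 := ⟨(hwalk x0 x1).choose⟩
  obtain ⟨p, hp⟩ := hr.exists_walk_length_eq_dist
  have hws := walk_slab hd hm p
  have e0 : slabIdx x0 = 0 := slabIdx_vert hd hm
  have e1 : slabIdx x1 = L.length - 1 := slabIdx_vert hd hm
  have hdd := SimpleGraph.dist_le_diam hne (u := x0) (v := x1)
  omega

/-! ### Facts about `tensorPow` -/

lemma tensorSeq_length (γ γ' : List ℕ) :
    (tensorSeq γ γ').length = γ.length * γ'.length := by
  induction γ with
  | nil => simp [tensorSeq]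
  | cons a t ih =>
    have he : tensorSeq (a :: t) γ' = (γ'.map fun g' => a * g') ++ tensorSeq t γ' := by
      simp [tensorSeq]
    rw [he, List.length_append, List.length_map, ih, List.length_cons]
    ring

lemma tensorSeq_head {X Y : List ℕ} {x y : ℕ} (hx : X.head? = some x)
    (hy : Y.head? = some y) : (tensorSeq X Y).head? = some (x * y) := by
  cases X with
  | nil => simp at hx
  | cons a t =>
    cases Y with
    | nil => simp at hy
    | cons c s =>
      simp only [List.head?_cons, Option.some.injEq] at hx hy
      rw [← hx, ← hy]
      simp [tensorSeq]

lemma tensorPow_length (γ : List ℕ) (n : ℕ) : (tensorPow γ n).length = γ.length ^ n := by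
  induction n with
  | zero => simp [tensorPow]
  | succ n ih => rw [tensorPow, tensorSeq_length, ih, pow_succ]; ring

lemma tensorPow_pos (γ : List ℕ) (hpos : ∀ x ∈ γ, 0 < x) (n : ℕ) :
    ∀ x ∈ tensorPow γ n, 0 < x := by
  induction n with
  | zero => intro x hx; simp [tensorPow] at hx; omega
  | succ n ih =>
    intro x hx
    rw [tensorPow, tensorSeq] at hx
    rw [List.mem_flatMap] at hx
    obtain ⟨g, hg, hx⟩ := hx
    rw [List.mem_map] at hx
    obtain ⟨g', hg', rfl⟩ := hx
    exact Nat.mul_pos (hpos g hg) (ih g' hg')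

lemma tensorPow_head (γ : List ℕ) (hhead : γ.head? = some γ.length) (n : ℕ) :
    (tensorPow γ n).head? = some (tensorPow γ n).length := by
  induction n with
  | zero => simp [tensorPow]
  | succ n ih =>
    rw [tensorPow, tensorSeq_head hhead ih, tensorSeq_length]

end DiamBoundsAux

/-- (Lemma 3.8). If `γ_1 = γ_b = b`, then `b^n - 1 ≤ diam G(T^{(d)}_{γ^{⊗n}}) ≤ (d+1)·b^n`. -/
theorem diam_bounds (d : ℕ) (hd : 2 ≤ d) (γ : List ℕ) (hpos : ∀ x ∈ γ, 0 < x)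
    (hhead : γ.head? = some γ.length) (hlast : γ.getLast? = some γ.length) (n : ℕ) :
    γ.length ^ n - 1 ≤ (tangencyGraph (seqTiling d (tensorPow γ n))).diam ∧
    (tangencyGraph (seqTiling d (tensorPow γ n))).diam ≤ (d + 1) * γ.length ^ n := by
  have h1 := DiamBoundsAux.main_bounds d hd (tensorPow γ n)
    (DiamBoundsAux.tensorPow_pos γ hpos n) (DiamBoundsAux.tensorPow_head γ hhead n)
  rwa [DiamBoundsAux.tensorPow_length] at h1

end
end
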